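/- Let a, b, c be nonzero squarefree pairwise coprime integers. If ax² + by² + cz² = 0 has a nonzero integer solution, then -ab is a quadratic residue modulo c, i.e., there exists d with d² ≡ -ab (mod c). -/

import Mathlib

theorem stmt_1 (a b c : ℤ) (ha : a ≠ 0) (hb : b ≠ 0) (hc : c ≠ 0)
    (hsa : Squarefree a) (hsb : Squarefree b) (hsc : Squarefree c)
    (hab : IsCoprime a b) (hbc : IsCoprime b c) (hca : IsCoprime c a)
    (hsol : ∃ x y z : ℤ, (x, y, z) ≠ (0, 0, 0) ∧ a * x ^ 2 + b * y ^ 2 + c * z ^ 2 = 0) :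
    ∃ d : ℤ, d ^ 2 ≡ -(a * b) [ZMOD c] := by
  obtain ⟨x, y, z, hne, heq⟩ := hsol
  -- divide by gcd to get a primitive solution
  set g : ℕ := x.gcd (y.gcd z) with hg
  have hg0 : g ≠ 0 := by
    intro h
    apply hne
    have h1 := Int.gcd_eq_zero_iff.mp h
    have h2' : y.gcd z = 0 := by exact_mod_cast h1.2
    have h2 := Int.gcd_eq_zero_iff.mp h2'
    simp [h1.1, h2.1, h2.2]
  obtain ⟨x₁, hx₁⟩ : (g : ℤ) ∣ x := Int.gcd_dvd_left _ _
  obtain ⟨y₁, hy₁⟩ : (g : ℤ) ∣ y := dvd_trans (Int.gcd_dvd_right _ _) (Int.gcd_dvd_left _ _)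
  obtain ⟨z₁, hz₁⟩ : (g : ℤ) ∣ z := dvd_trans (Int.gcd_dvd_right _ _) (Int.gcd_dvd_right _ _)
  have hgz : (g : ℤ) ≠ 0 := by exact_mod_cast hg0
  have heq₁ : a * x₁ ^ 2 + b * y₁ ^ 2 + c * z₁ ^ 2 = 0 := by
    have h2 : (g : ℤ) ^ 2 * (a * x₁ ^ 2 + b * y₁ ^ 2 + c * z₁ ^ 2) = 0 := by
      rw [hx₁, hy₁, hz₁] at heq; ring_nf at heq ⊢; linarith
    rcases mul_eq_zero.mp h2 with h | h
    · exact absurd h (pow_ne_zero 2 hgz)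
    · exact h
  have hprim : ∀ p : ℕ, p.Prime → (p : ℤ) ∣ x₁ → (p : ℤ) ∣ y₁ → (p : ℤ) ∣ z₁ → False := by
    intro p hp hpx hpy hpz
    have hdx : ((g * p : ℕ) : ℤ) ∣ x := by
      push_cast; rw [hx₁]; exact mul_dvd_mul_left _ hpx
    have hdy : ((g * p : ℕ) : ℤ) ∣ y := by
      push_cast; rw [hy₁]; exact mul_dvd_mul_left _ hpy
    have hdz : ((g * p : ℕ) : ℤ) ∣ z := by
      push_cast; rw [hz₁]; exact mul_dvd_mul_left _ hpz
    have : (g * p : ℕ) ∣ g := by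
      rw [hg]
      exact Int.dvd_gcd hdx (Int.natCast_dvd_natCast.mpr (Int.dvd_gcd hdy hdz))
    have hp1 : p ∣ 1 := by
      have h' : g * p ∣ g * 1 := by simpa using this
      exact (Nat.mul_dvd_mul_iff_left (Nat.pos_of_ne_zero hg0)).mp h'
    exact Nat.Prime.one_lt hp |>.ne' (Nat.dvd_one.mp hp1)
  -- y₁ is coprime to c
  have hyc : IsCoprime y₁ c := by
    rw [Int.isCoprime_iff_gcd_eq_one]
    by_contra hne1
    have hgcd0 : y₁.gcd c ≠ 0 := by
      intro h
      exact hc (Int.gcd_eq_zero_iff.mp h).2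
    obtain ⟨p, hp, hpd⟩ := Nat.exists_prime_and_dvd hne1
    have hpy : (p : ℤ) ∣ y₁ := dvd_trans (Int.natCast_dvd_natCast.mpr hpd) (Int.gcd_dvd_left _ _)
    have hpc : (p : ℤ) ∣ c := dvd_trans (Int.natCast_dvd_natCast.mpr hpd) (Int.gcd_dvd_right _ _)
    have hpI : Prime (p : ℤ) := Nat.prime_iff_prime_int.mp hp
    have hpa : ¬ (p : ℤ) ∣ a := by
      intro hpa
      exact hpI.not_unit (hca.isUnit_of_dvd' hpc hpa)
    -- p ∣ a x₁², so p ∣ x₁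
    have hpx : (p : ℤ) ∣ x₁ := by
      have h1 : (p : ℤ) ∣ a * x₁ ^ 2 := by
        have : a * x₁ ^ 2 = -(b * y₁ ^ 2 + c * z₁ ^ 2) := by linarith
        rw [this]
        exact dvd_neg.mpr (dvd_add (Dvd.dvd.mul_left (hpy.pow two_ne_zero) b)
          (Dvd.dvd.mul_right hpc _))
      have h2 : (p : ℤ) ∣ x₁ ^ 2 := (hpI.dvd_or_dvd h1).resolve_left hpa
      exact hpI.dvd_of_dvd_pow h2
    -- p² ∣ c z₁², and p² ∤ c, so p ∣ z₁
    obtain ⟨c', hc'⟩ := hpc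
    have hpc' : ¬ (p : ℤ) ∣ c' := by
      intro hd
      obtain ⟨c'', hc''⟩ := hd
      apply hpI.not_unit
      apply hsc (p : ℤ)
      rw [hc', hc'']
      exact ⟨c'', by ring⟩
    have hpz : (p : ℤ) ∣ z₁ := by
      obtain ⟨x₂, hx₂⟩ := hpx
      obtain ⟨y₂, hy₂⟩ := hpy
      have hpz0 : (p : ℤ) ≠ 0 := by exact_mod_cast hp.ne_zero
      have h4 : c' * z₁ ^ 2 = (p : ℤ) * (-(a * x₂ ^ 2 + b * y₂ ^ 2)) := by
        apply mul_left_cancel₀ hpz0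
        linear_combination heq₁ - z₁ ^ 2 * hc' - a * (x₁ + (p:ℤ) * x₂) * hx₂
          - b * (y₁ + (p:ℤ) * y₂) * hy₂
      have h2 : (p : ℤ) ∣ c' * z₁ ^ 2 := ⟨_, h4⟩
      have h5 : (p : ℤ) ∣ z₁ ^ 2 := (hpI.dvd_or_dvd h2).resolve_left hpc'
      exact hpI.dvd_of_dvd_pow h5
    exact hprim p hp hpx hpy hpz
  -- conclude
  obtain ⟨u, v, huv⟩ := hyc
  obtain ⟨k, hk⟩ : c ∣ a * x₁ ^ 2 + b * y₁ ^ 2 := ⟨-z₁ ^ 2, by linarith⟩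
  have hdvd : c ∣ (a * x₁ * u) ^ 2 - -(a * b) := by
    refine ⟨a * u ^ 2 * k + a * b * v * (2 - v * c), ?_⟩
    linear_combination (a * u ^ 2) * hk + (a * b * (v * c - 1 - u * y₁)) * huv
  exact ⟨a * x₁ * u, (Int.modEq_iff_dvd.mpr hdvd).symm⟩
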